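/- arXiv:1901.07167 — 3 statements merged into one kernel-verified Lean document; each statement's English description precedes it below -/
import Mathlib

section
/- For every positive integer $M$ and real $u \in [0,1]$, $\int_0^1 (1 - u^3/6)^M\,du = \frac{1}{M^{1/3}}\int_0^{M^{1/3}} (1 - x^3/(6M))^M\,dx$, and consequently $M^{1/3}\int_0^1 (1-u^3/6)^M\,du \to 6^{1/3}\Gamma(4/3)$ as $M \to \infty$. -/
open MeasureTheory Real Filter Set

private noncomputable def cc (M : ℕ) : ℝ := (M:ℝ) ^ ((1:ℝ)/3)

private lemma cc_cube (M : ℕ) : cc M ^ 3 = (M:ℝ) := by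
  rw [cc, ← Real.rpow_natCast ((M:ℝ) ^ ((1:ℝ)/3)) 3, ← Real.rpow_mul (Nat.cast_nonneg M)]
  norm_num

private lemma cc_pos {M : ℕ} (hM : 0 < M) : 0 < cc M :=
  Real.rpow_pos_of_pos (by exact_mod_cast hM) _

private lemma part1 (M : ℕ) (hM : 0 < M) :
    ∫ u in (0:ℝ)..1, (1 - u ^ 3 / 6) ^ M =
      (1 / (M:ℝ) ^ ((1:ℝ)/3)) *
        ∫ x in (0:ℝ)..((M:ℝ) ^ ((1:ℝ)/3)), (1 - x ^ 3 / (6 * M)) ^ M := by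
  have hMne : (M:ℝ) ≠ 0 := Nat.cast_ne_zero.mpr hM.ne'
  have h := intervalIntegral.integral_comp_mul_right (a := (0:ℝ)) (b := 1)
    (fun x => (1 - x ^ 3 / (6 * M)) ^ M) (cc_pos hM).ne'
  rw [zero_mul, one_mul, smul_eq_mul] at h
  have hcc : cc M = (M:ℝ) ^ ((1:ℝ)/3) := rfl
  rw [← hcc, one_div, ← h]
  apply intervalIntegral.integral_congr
  intro u hu
  simp only
  congr 1
  rw [mul_pow, cc_cube]
  field_simp

private lemma hI (M : ℕ) (hM : 0 < M) :
    (M:ℝ) ^ ((1:ℝ)/3) * ∫ u in (0:ℝ)..1, (1 - u ^ 3 / 6) ^ M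
      = ∫ x in Ioi (0:ℝ),
          (Ioc (0:ℝ) (cc M)).indicator (fun x => (1 - x ^ 3 / (6 * M)) ^ M) x := by
  have hcc : cc M = (M:ℝ) ^ ((1:ℝ)/3) := rfl
  rw [part1 M hM, ← mul_assoc, mul_one_div, ← hcc, div_self (cc_pos hM).ne', one_mul,
    intervalIntegral.integral_of_le (cc_pos hM).le,
    setIntegral_indicator measurableSet_Ioc,
    Set.inter_eq_self_of_subset_right Set.Ioc_subset_Ioi_self]

theorem stmt_5 :
    (∀ M : ℕ, 0 < M →
      ∫ u in (0:ℝ)..1, (1 - u ^ 3 / 6) ^ M =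
        (1 / (M:ℝ) ^ ((1:ℝ)/3)) *
          ∫ x in (0:ℝ)..((M:ℝ) ^ ((1:ℝ)/3)), (1 - x ^ 3 / (6 * M)) ^ M) ∧
    Tendsto (fun M : ℕ => (M:ℝ) ^ ((1:ℝ)/3) * ∫ u in (0:ℝ)..1, (1 - u ^ 3 / 6) ^ M)
      atTop (nhds ((6:ℝ) ^ ((1:ℝ)/3) * Real.Gamma (4/3))) := by
  refine ⟨part1, ?_⟩
  have hval : (∫ x in Ioi (0:ℝ), Real.exp (-(1/6) * x ^ (3:ℝ)))
      = (6:ℝ) ^ ((1:ℝ)/3) * Real.Gamma (4/3) := by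
    rw [integral_exp_neg_mul_rpow (by norm_num) (by norm_num : (0:ℝ) < 1/6)]
    rw [show (-1/(3:ℝ)) = -(1/3) by ring, Real.rpow_neg (by norm_num), one_div (6:ℝ),
      Real.inv_rpow (by norm_num), inv_inv]
    norm_num
  rw [← hval]
  have hlim : Tendsto (fun M : ℕ => ∫ x in Ioi (0:ℝ),
      (Ioc (0:ℝ) (cc M)).indicator (fun x => (1 - x ^ 3 / (6 * M)) ^ M) x)
      atTop (nhds (∫ x in Ioi (0:ℝ), Real.exp (-(1/6) * x ^ (3:ℝ)))) := by
    apply tendsto_integral_of_dominated_convergence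
      (fun x => Real.exp (-(1/6) * x ^ (3:ℝ)))
    · intro n
      exact (((continuous_const.sub ((continuous_pow 3).div_const _)).pow n).aestronglyMeasurable).indicator
        measurableSet_Ioc
    · have h := integrableOn_rpow_mul_exp_neg_mul_rpow (s := 0) (p := 3) (b := 1/6)
        (by norm_num) (by norm_num) (by norm_num)
      simpa [Real.rpow_zero, IntegrableOn] using h
    · intro n
      filter_upwards [ae_restrict_mem measurableSet_Ioi] with x hx
      by_cases hxn : x ∈ Ioc (0:ℝ) (cc n)
      · have hn : 0 < n := by
          by_contra h
          have : n = 0 := by omega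
          subst this
          have : cc 0 = 0 := by simp [cc, Real.zero_rpow]
          rw [this] at hxn
          exact absurd hxn.2 (not_le.mpr hxn.1)
        have hnne : (n:ℝ) ≠ 0 := Nat.cast_ne_zero.mpr hn.ne'
        have hx3 : x ^ 3 ≤ (n:ℝ) := by
          calc x ^ 3 ≤ (cc n) ^ 3 := pow_le_pow_left₀ hxn.1.le hxn.2 3
          _ = (n:ℝ) := cc_cube n
        have h1 : x ^ 3 / (6 * n) ≤ 1 := by
          rw [div_le_one (by positivity)]
          nlinarith
        have h0 : (0:ℝ) ≤ 1 - x ^ 3 / (6 * n) := by linarith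
        rw [Set.indicator_of_mem hxn, Real.norm_eq_abs, abs_of_nonneg (pow_nonneg h0 n)]
        have hexp : 1 - x ^ 3 / (6 * n) ≤ Real.exp (-(x ^ 3 / (6 * n))) := by
          have := Real.add_one_le_exp (-(x ^ 3 / (6 * n)))
          linarith
        calc (1 - x ^ 3 / (6 * n)) ^ n ≤ Real.exp (-(x ^ 3 / (6 * n))) ^ n :=
              pow_le_pow_left₀ h0 hexp n
          _ = Real.exp (n * -(x ^ 3 / (6 * n))) := by rw [← Real.exp_nat_mul]
          _ = Real.exp (-(1/6) * x ^ (3:ℝ)) := by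
              rw [show x ^ (3:ℝ) = x ^ (3:ℕ) by
                rw [← Real.rpow_natCast x 3]; norm_num]
              congr 1
              field_simp
      · rw [Set.indicator_of_notMem hxn]
        simp only [norm_zero]
        positivity
    · filter_upwards [ae_restrict_mem measurableSet_Ioi] with x hx
      have hx0 : (0:ℝ) < x := hx
      have base := Real.tendsto_one_add_div_pow_exp (-(x ^ 3 / 6))
      have harg : Real.exp (-(x ^ 3 / 6)) = Real.exp (-(1/6) * x ^ (3:ℝ)) := by
        rw [show x ^ (3:ℝ) = x ^ (3:ℕ) by
          rw [← Real.rpow_natCast x 3]; norm_num]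
        ring_nf
      rw [harg] at base
      apply base.congr'
      filter_upwards [eventually_ge_atTop (max 1 ⌈x ^ 3⌉₊)] with n hn
      have hn1 : 1 ≤ n := le_trans (le_max_left _ _) hn
      have hnx : x ^ 3 ≤ (n:ℝ) := by
        calc x ^ 3 ≤ (⌈x ^ 3⌉₊ : ℝ) := Nat.le_ceil _
          _ ≤ (n:ℝ) := by exact_mod_cast le_trans (le_max_right _ _) hn
      have hxcc : x ≤ cc n := by
        apply le_of_pow_le_pow_left₀ (by norm_num : 3 ≠ 0) (cc_pos (by omega)).le
        rw [cc_cube]; exact hnx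
      have hnne : (n:ℝ) ≠ 0 := by positivity
      rw [Set.indicator_of_mem (Set.mem_Ioc.mpr ⟨hx0, hxcc⟩)]
      congr 1
      rw [neg_div, div_div]
      ring
  refine hlim.congr' ?_
  filter_upwards [eventually_ge_atTop 1] with M hM
  exact (hI M hM).symm
end

section
/- Let $W$ be the minimum over all pairs $(i,j) \in [n]^2$ of $a_i + b_j + c_{i,j}$, where all $a_i, b_j, c_{i,j}$ are independent uniform $[0,1]$ random variables. Then $\mathbb{E}(W) \ge c\, n^{-2/3}$ for some absolute constant $c > 0$ and all sufficiently large $n$. -/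
open MeasureTheory ProbabilityTheory

theorem stmt_16 :
    ∃ c : ℝ, 0 < c ∧ ∃ N : ℕ, ∀ n : ℕ, N ≤ n → 1 ≤ n →
      ∀ (Ω : Type) (_ : MeasureSpace Ω), IsProbabilityMeasure (ℙ : Measure Ω) →
      ∀ (X : (Fin n ⊕ Fin n ⊕ Fin n × Fin n) → Ω → ℝ),
        (∀ i, Measurable (X i)) →
        iIndepFun X ℙ →
        (∀ i, Measure.map (X i) ℙ = volume.restrict (Set.Icc (0:ℝ) 1)) →
        c * (n:ℝ) ^ (-(2:ℝ)/3) ≤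
          ∫ ω, (⨅ p : Fin n × Fin n,
            (X (Sum.inl p.1) ω + X (Sum.inr (Sum.inl p.2)) ω +
              X (Sum.inr (Sum.inr p)) ω)) ∂ℙ := by
  classical
  refine ⟨7/16, by norm_num, 1, fun n _ hn Ω _ hP X hX hind hmap => ?_⟩
  haveI : NeZero n := ⟨Nat.one_le_iff_ne_zero.mp hn⟩
  have hn1 : (1:ℝ) ≤ n := by exact_mod_cast hn
  have hnpos : (0:ℝ) < n := by linarith
  set t : ℝ := (n:ℝ) ^ (-(2:ℝ)/3) / 2 with ht_def
  have hrpos : (0:ℝ) < (n:ℝ) ^ (-(2:ℝ)/3) := Real.rpow_pos_of_pos hnpos _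
  have ht0 : 0 < t := by positivity
  have hr1 : (n:ℝ) ^ (-(2:ℝ)/3) ≤ 1 :=
    Real.rpow_le_one_of_one_le_of_nonpos hn1 (by norm_num)
  have ht1 : t ≤ 1 := by rw [ht_def]; linarith
  -- the summand functions
  set f : Fin n × Fin n → Ω → ℝ := fun p ω =>
    X (Sum.inl p.1) ω + X (Sum.inr (Sum.inl p.2)) ω + X (Sum.inr (Sum.inr p)) ω with hf_def
  have hfmeas : ∀ p, Measurable (f p) := fun p =>
    ((hX _).add (hX _)).add (hX _)
  set W : Ω → ℝ := fun ω => ⨅ p : Fin n × Fin n, f p ω with hW_def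
  have hWmeas : Measurable W := Measurable.iInf fun p => hfmeas p
  have p0 : Fin n × Fin n := (⟨0, hn⟩, ⟨0, hn⟩)
  -- marginal bound
  have hmarg : ∀ i, ℙ (X i ⁻¹' Set.Iio t) ≤ ENNReal.ofReal t := by
    intro i
    rw [← Measure.map_apply (hX i) measurableSet_Iio, hmap i,
      Measure.restrict_apply measurableSet_Iio]
    calc volume (Set.Iio t ∩ Set.Icc 0 1)
        ≤ volume (Set.Ico 0 t) := measure_mono (fun x hx => ⟨hx.2.1, hx.1⟩)
      _ = ENNReal.ofReal t := by rw [Real.volume_Ico, sub_zero]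
  -- good set
  set G : Set Ω := {ω | ∀ i, X i ω ∈ Set.Icc (0:ℝ) 1} with hG_def
  have hGae : ∀ᵐ ω ∂ℙ, ω ∈ G := by
    rw [ae_iff]
    have hset : {ω | ¬ ω ∈ G} = ⋃ i, X i ⁻¹' (Set.Icc (0:ℝ) 1)ᶜ := by
      ext ω
      simp only [hG_def, Set.mem_setOf_eq, Set.mem_iUnion, Set.mem_preimage,
        Set.mem_compl_iff, not_forall]
    rw [hset]
    refine le_antisymm (le_trans (measure_iUnion_le _) ?_) zero_le
    have hzero : ∀ i, ℙ (X i ⁻¹' (Set.Icc (0:ℝ) 1)ᶜ) = 0 := by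
      intro i
      rw [← Measure.map_apply (hX i) measurableSet_Icc.compl, hmap i,
        Measure.restrict_apply measurableSet_Icc.compl]
      simp
    simp only [hzero, tsum_zero, le_refl]
  have hGc : ℙ Gᶜ = 0 := by
    have := hGae; rwa [ae_iff] at this
  -- bad events
  set B : Fin n × Fin n → Set Ω := fun p => {ω | f p ω < t} with hB_def
  have hBmeas : ∀ p, MeasurableSet (B p) := fun p =>
    measurableSet_lt (hfmeas p) measurable_const
  have hBp : ∀ p, ℙ (B p) ≤ ENNReal.ofReal t ^ 3 := by
    intro p
    set S : Finset (Fin n ⊕ Fin n ⊕ Fin n × Fin n) :=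
      {Sum.inl p.1, Sum.inr (Sum.inl p.2), Sum.inr (Sum.inr p)} with hS_def
    have hsub : B p ⊆ (⋂ i ∈ S, X i ⁻¹' Set.Iio t) ∪ Gᶜ := by
      intro ω hω
      by_cases hωG : ω ∈ G
      · left
        simp only [Set.mem_iInter₂]
        intro i hi
        have h1 := (hωG (Sum.inl p.1)).1
        have h2 := (hωG (Sum.inr (Sum.inl p.2))).1
        have h3 := (hωG (Sum.inr (Sum.inr p))).1
        have hlt : f p ω < t := hω
        simp only [hS_def, Finset.mem_insert, Finset.mem_singleton] at hi
        rcases hi with rfl | rfl | rfl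
        · exact Set.mem_preimage.2 (by simp only [Set.mem_Iio]; simp only [hf_def] at hlt; linarith)
        · exact Set.mem_preimage.2 (by simp only [Set.mem_Iio]; simp only [hf_def] at hlt; linarith)
        · exact Set.mem_preimage.2 (by simp only [Set.mem_Iio]; simp only [hf_def] at hlt; linarith)
      · right; exact hωG
    have hprod : ℙ (⋂ i ∈ S, X i ⁻¹' Set.Iio t) ≤ ENNReal.ofReal t ^ 3 := by
      have := hind.measure_inter_preimage_eq_mul (sets := fun _ => Set.Iio t) S
        (fun i _ => measurableSet_Iio)
      rw [this]
      have h12 : (Sum.inl p.1 : Fin n ⊕ Fin n ⊕ Fin n × Fin n) ∉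
          ({Sum.inr (Sum.inl p.2), Sum.inr (Sum.inr p)} : Finset _) := by simp
      have h23 : (Sum.inr (Sum.inl p.2) : Fin n ⊕ Fin n ⊕ Fin n × Fin n) ∉
          ({Sum.inr (Sum.inr p)} : Finset _) := by simp
      rw [hS_def, Finset.prod_insert h12, Finset.prod_insert h23, Finset.prod_singleton]
      calc ℙ (X (Sum.inl p.1) ⁻¹' Set.Iio t) * (ℙ (X (Sum.inr (Sum.inl p.2)) ⁻¹' Set.Iio t) *
            ℙ (X (Sum.inr (Sum.inr p)) ⁻¹' Set.Iio t))
          ≤ ENNReal.ofReal t * (ENNReal.ofReal t * ENNReal.ofReal t) :=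
            mul_le_mul' (hmarg _) (mul_le_mul' (hmarg _) (hmarg _))
        _ = ENNReal.ofReal t ^ 3 := by ring
    calc ℙ (B p) ≤ ℙ ((⋂ i ∈ S, X i ⁻¹' Set.Iio t) ∪ Gᶜ) := measure_mono hsub
      _ ≤ ℙ (⋂ i ∈ S, X i ⁻¹' Set.Iio t) + ℙ Gᶜ := measure_union_le _ _
      _ = ℙ (⋂ i ∈ S, X i ⁻¹' Set.Iio t) := by rw [hGc, add_zero]
      _ ≤ ENNReal.ofReal t ^ 3 := hprod
  -- union bound
  set E : Set Ω := ⋃ p, B p with hE_def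
  have hEmeas : MeasurableSet E := MeasurableSet.iUnion hBmeas
  have hEbound : ℙ E ≤ ENNReal.ofReal (1/8) := by
    have h1 : ℙ E ≤ ∑ p : Fin n × Fin n, ℙ (B p) := by
      rw [hE_def]
      exact le_trans (measure_iUnion_le _) (le_of_eq (tsum_fintype _))
    have h2 : ∑ p : Fin n × Fin n, ℙ (B p) ≤
        (Fintype.card (Fin n × Fin n) : ENNReal) * ENNReal.ofReal t ^ 3 := by
      calc ∑ p : Fin n × Fin n, ℙ (B p) ≤ ∑ _p : Fin n × Fin n, ENNReal.ofReal t ^ 3 :=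
            Finset.sum_le_sum (fun p _ => hBp p)
        _ = (Fintype.card (Fin n × Fin n) : ENNReal) * ENNReal.ofReal t ^ 3 := by
            rw [Finset.sum_const, Finset.card_univ, nsmul_eq_mul]
    have h3 : (Fintype.card (Fin n × Fin n) : ENNReal) * ENNReal.ofReal t ^ 3 =
        ENNReal.ofReal ((n:ℝ)^2 * t^3) := by
      rw [← ENNReal.ofReal_pow ht0.le, Fintype.card_prod, Fintype.card_fin]
      rw [← ENNReal.ofReal_natCast (n*n), ← ENNReal.ofReal_mul (by positivity)]
      congr 1
      push_cast
      ring
    have h4 : (n:ℝ)^2 * t^3 = 1/8 := by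
      have hne : (n:ℝ) ≠ 0 := ne_of_gt hnpos
      have ht3 : t^3 = ((n:ℝ) ^ (-(2:ℝ)/3))^(3:ℕ) / 8 := by rw [ht_def]; ring
      have h5 : ((n:ℝ) ^ (-(2:ℝ)/3))^(3:ℕ) = ((n:ℝ)^(2:ℕ))⁻¹ := by
        rw [← Real.rpow_natCast ((n:ℝ) ^ (-(2:ℝ)/3)) 3, ← Real.rpow_mul hnpos.le,
          ← Real.rpow_natCast (n:ℝ) 2, ← Real.rpow_neg hnpos.le]
        norm_num
      rw [ht3, h5]
      field_simp
    rw [h4] at h3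
    exact h1.trans (h2.trans_eq h3)
  have hEc : ENNReal.ofReal (7/8) ≤ ℙ Eᶜ := by
    rw [prob_compl_eq_one_sub hEmeas]
    calc ENNReal.ofReal (7/8) = 1 - ENNReal.ofReal (1/8) := by
          rw [← ENNReal.ofReal_one, ← ENNReal.ofReal_sub _ (by norm_num)]
          norm_num
      _ ≤ 1 - ℙ E := tsub_le_tsub_left hEbound 1
  have hEcReal : (7:ℝ)/8 ≤ (ℙ Eᶜ).toReal := by
    have := ENNReal.toReal_mono (measure_ne_top ℙ Eᶜ) hEc
    rwa [ENNReal.toReal_ofReal (by norm_num)] at this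
  -- integrability of W
  have hWbdd : ∀ᵐ ω ∂ℙ, ‖W ω‖ ≤ 3 := by
    filter_upwards [hGae] with ω hω
    have hnonneg : ∀ p, (0:ℝ) ≤ f p ω := by
      intro p
      have h1 := (hω (Sum.inl p.1)).1
      have h2 := (hω (Sum.inr (Sum.inl p.2))).1
      have h3 := (hω (Sum.inr (Sum.inr p))).1
      simp only [hf_def]; linarith
    have hlow : (0:ℝ) ≤ W ω := le_ciInf hnonneg
    have hup : W ω ≤ 3 := by
      refine le_trans (ciInf_le (Finite.bddBelow_range _) p0) ?_
      have h1 := (hω (Sum.inl p0.1)).2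
      have h2 := (hω (Sum.inr (Sum.inl p0.2))).2
      have h3 := (hω (Sum.inr (Sum.inr p0))).2
      simp only [hf_def]; linarith
    rw [Real.norm_eq_abs, abs_le]
    exact ⟨by linarith, hup⟩
  have hWint : Integrable W ℙ :=
    Integrable.mono' (integrable_const 3) hWmeas.aestronglyMeasurable hWbdd
  have hIndInt : Integrable (Eᶜ.indicator fun _ => t) ℙ :=
    (integrable_const t).indicator hEmeas.compl
  have hmono : ∫ ω, Eᶜ.indicator (fun _ => t) ω ∂ℙ ≤ ∫ ω, W ω ∂ℙ := by
    refine integral_mono_ae hIndInt hWint ?_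
    filter_upwards [hGae] with ω hω
    have hnonneg : ∀ p, (0:ℝ) ≤ f p ω := by
      intro p
      have h1 := (hω (Sum.inl p.1)).1
      have h2 := (hω (Sum.inr (Sum.inl p.2))).1
      have h3 := (hω (Sum.inr (Sum.inr p))).1
      simp only [hf_def]; linarith
    by_cases hωE : ω ∈ Eᶜ
    · rw [Set.indicator_of_mem hωE]
      refine le_ciInf fun p => ?_
      have : ω ∉ B p := fun h => hωE (Set.mem_iUnion.2 ⟨p, h⟩)
      exact le_of_not_gt this
    · rw [Set.indicator_of_notMem hωE]
      exact le_ciInf hnonneg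
  have hIndVal : ∫ ω, Eᶜ.indicator (fun _ => t) ω ∂ℙ = (ℙ Eᶜ).toReal * t := by
    rw [integral_indicator_const _ hEmeas.compl, smul_eq_mul, measureReal_def]
  have hfinal : (7:ℝ)/16 * ((n:ℝ) ^ (-(2:ℝ)/3)) ≤ ∫ ω, W ω ∂ℙ := by
    calc (7:ℝ)/16 * ((n:ℝ) ^ (-(2:ℝ)/3)) = 7/8 * t := by rw [ht_def]; ring
      _ ≤ (ℙ Eᶜ).toReal * t := mul_le_mul_of_nonneg_right hEcReal ht0.le
      _ = ∫ ω, Eᶜ.indicator (fun _ => t) ω ∂ℙ := hIndVal.symm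
      _ ≤ ∫ ω, W ω ∂ℙ := hmono
  exact hfinal
end

section
/- Suppose the costs $W_{i,j,k} = a_{i,j} + b_{i,k} + c_{j,k}$ for $i,j,k \in [n]$ where all $a_{i,j}, b_{i,k}, c_{j,k}$ are independent uniform $[0,1]$ random variables, and let $Z_n = \min_{\sigma,\tau} \sum_{i=1}^n W_{i,\sigma(i),\tau(i)}$ over permutations $\sigma,\tau$ of $[n]$. Then $\mathbb{E}(Z_n) \ge c_1 n^{1/3}$ for some absolute constant $c_1 > 0$ and all sufficiently large $n$. -/
open MeasureTheory ProbabilityTheory Real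

lemma aux_measurable_inf' {Ω : Type} [MeasurableSpace Ω] {ι : Type*}
    (s : Finset ι) (hs : s.Nonempty) (f : ι → Ω → ℝ) (hf : ∀ i, Measurable (f i)) :
    Measurable fun ω => s.inf' hs fun i => f i ω := by
  induction hs using Finset.Nonempty.cons_induction with
  | singleton i => simpa using hf i
  | cons a s ha hs ih =>
      have : (fun ω => (Finset.cons a s ha).inf' (Finset.cons_nonempty ha) fun i => f i ω)
          = fun ω => min (f a ω) (s.inf' hs fun i => f i ω) := by
        funext ω
        rw [Finset.inf'_cons (H := hs)]
      rw [this]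
      exact (hf a).min ih

lemma aux_mgf_uniform_le {Ω : Type} [MeasureSpace Ω] [IsProbabilityMeasure (ℙ : Measure Ω)]
    {Y : Ω → ℝ} (hm : Measurable Y)
    (hmap : Measure.map Y ℙ = volume.restrict (Set.Icc (0:ℝ) 1))
    {l : ℝ} (hl : 0 < l) : mgf Y ℙ (-l) ≤ 1 / l := by
  have h1 : mgf Y ℙ (-l) = ∫ x in Set.Icc (0:ℝ) 1, exp (-l * x) := by
    have hsm : AEStronglyMeasurable (fun x : ℝ => exp (-l * x)) (Measure.map Y ℙ) :=
      Measurable.aestronglyMeasurable (by fun_prop)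
    rw [mgf, ← hmap, integral_map hm.aemeasurable hsm]
  have hsub : Set.Icc (0:ℝ) 1 ≤ᵐ[volume] Set.Ioi (0:ℝ) := by
    rw [ae_le_set]
    refine measure_mono_null (fun x hx => ?_) (volume_singleton (a := (0:ℝ)))
    rcases hx with ⟨⟨h0, _⟩, h2⟩
    simp only [Set.mem_Ioi, not_lt] at h2
    exact le_antisymm h2 h0
  have h2 : (∫ x in Set.Icc (0:ℝ) 1, exp (-l * x))
      ≤ ∫ x in Set.Ioi (0:ℝ), exp (-l * x) :=
    setIntegral_mono_set (exp_neg_integrableOn_Ioi 0 hl)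
      (Filter.Eventually.of_forall fun x => (exp_pos _).le) hsub
  have h3 : (∫ x in Set.Ioi (0:ℝ), exp (-l * x)) = 1 / l := by
    have := MeasureTheory.integral_comp_mul_left_Ioi (fun u => exp (-u)) 0 hl
    simp only [neg_mul, mul_zero] at this ⊢
    rw [this, integral_exp_neg_Ioi, neg_zero, exp_zero, smul_eq_mul, mul_one, one_div]
  rw [h1]
  exact h2.trans h3.le

lemma aux_ae_mem {Ω : Type} [MeasureSpace Ω]
    {Y : Ω → ℝ} (hm : Measurable Y)
    (hmap : Measure.map Y ℙ = volume.restrict (Set.Icc (0:ℝ) 1)) :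
    ∀ᵐ ω ∂(ℙ : Measure Ω), Y ω ∈ Set.Icc (0:ℝ) 1 := by
  rw [ae_iff]
  have : ℙ (Y ⁻¹' (Set.Icc (0:ℝ) 1)ᶜ) = 0 := by
    rw [← Measure.map_apply (hm) (measurableSet_Icc.compl), hmap,
      Measure.restrict_apply measurableSet_Icc.compl]
    simp
  exact this

lemma aux_chernoff {Ω : Type} [MeasureSpace Ω] [IsProbabilityMeasure (ℙ : Measure Ω)]
    {ι : Type} {X : ι → Ω → ℝ} (hmeas : ∀ i, Measurable (X i))
    (hindep : iIndepFun X ℙ)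
    (hmap : ∀ i, Measure.map (X i) ℙ = volume.restrict (Set.Icc (0:ℝ) 1))
    (s : Finset ι) {l ε : ℝ} (hl : 0 < l) :
    (ℙ {ω | (∑ p ∈ s, X p ω) ≤ ε}).toReal ≤ exp (l * ε) * (1/l) ^ s.card := by
  have hae : ∀ᵐ ω ∂(ℙ : Measure Ω), ∀ p ∈ (s : Set ι), 0 ≤ X p ω :=
    (MeasureTheory.ae_ball_iff s.countable_toSet).mpr
      (fun p _ => (aux_ae_mem (hmeas p) (hmap p)).mono fun ω h => h.1)
  have hfn : (∑ p ∈ s, X p) = fun ω => ∑ p ∈ s, X p ω := by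
    ext ω; simp
  have hsum_meas : Measurable (∑ p ∈ s, X p) := by
    rw [hfn]
    exact Finset.measurable_sum s (fun p _ => hmeas p)
  have hint : Integrable (fun ω => exp ((-l) * (∑ p ∈ s, X p) ω)) ℙ := by
    refine Integrable.mono' (integrable_const 1)
      (Measurable.aestronglyMeasurable (by fun_prop)) ?_
    filter_upwards [hae] with ω hω
    rw [Real.norm_eq_abs, abs_of_pos (exp_pos _)]
    refine Real.exp_le_one_iff.mpr ?_    -- exp x ≤ 1 ↔ x ≤ 0
    have h0 : 0 ≤ (∑ p ∈ s, X p) ω := by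
      rw [Finset.sum_apply]
      exact Finset.sum_nonneg (fun p hp => hω p hp)
    nlinarith
  have hch := measure_le_le_exp_mul_mgf (μ := ℙ) (X := ∑ p ∈ s, X p) ε
    (neg_nonpos.mpr hl.le) hint
  have hset : {ω | (∑ p ∈ s, X p) ω ≤ ε} = {ω | (∑ p ∈ s, X p ω) ≤ ε} := by
    ext ω; simp [Finset.sum_apply]
  rw [hset, neg_neg] at hch
  refine hch.trans ?_
  refine mul_le_mul_of_nonneg_left ?_ (exp_pos _).le
  rw [hindep.mgf_sum hmeas s, ← Finset.prod_const]
  exact Finset.prod_le_prod (fun p _ => mgf_nonneg)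
    (fun p _ => aux_mgf_uniform_le (hmeas p) (hmap p) hl)

lemma aux_exp3 : exp 3 ≤ 81 / 4 := by
  have h1 : exp 3 = exp 1 ^ 3 := by
    rw [← Real.exp_nat_mul]; norm_num
  have h2 : exp 1 ^ 3 ≤ (2.7182818286 : ℝ) ^ 3 :=
    pow_le_pow_left₀ (exp_pos 1).le Real.exp_one_lt_d9.le 3
  nlinarith [h2, h1]

lemma aux_numeric (n : ℕ) (hn3 : 3 ≤ n) :
    (n.factorial : ℝ) * (n.factorial : ℝ) *
      (exp ((3 * n / ((n:ℝ) ^ ((1:ℝ)/3))) * (n:ℝ) ^ ((1:ℝ)/3)) *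
        (1 / (3 * n / (n:ℝ) ^ ((1:ℝ)/3))) ^ (3 * n)) ≤ 1/2 := by
  have hn1 : 1 ≤ n := le_trans (by norm_num) hn3
  have hn0 : (0:ℝ) < n := by exact_mod_cast hn1
  set t₀ : ℝ := (n:ℝ) ^ ((1:ℝ)/3) with ht₀def
  have ht₀ : 0 < t₀ := Real.rpow_pos_of_pos hn0 _
  have h1 : (3 * (n:ℝ) / t₀) * t₀ = 3 * n := div_mul_cancel₀ _ ht₀.ne'
  have h2 : 1 / (3 * (n:ℝ) / t₀) = t₀ / (3 * n) := one_div_div _ _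
  rw [h1, h2]
  have ht3 : t₀ ^ (3 * n) = (n:ℝ) ^ n := by
    rw [ht₀def, ← Real.rpow_natCast ((n:ℝ) ^ ((1:ℝ)/3)) (3*n), ← Real.rpow_mul hn0.le,
      ← Real.rpow_natCast (n:ℝ) n]
    congr 1
    push_cast
    ring
  have hexp : exp (3 * (n:ℝ)) = exp 3 ^ n := by
    rw [← Real.exp_nat_mul]
    congr 1
    ring
  have hd : ((3:ℝ) * n) ^ (3 * n) = 27 ^ n * (n:ℝ) ^ (3 * n) := by
    rw [mul_pow, pow_mul]
    norm_num
  have hfrac : (t₀ / (3 * (n:ℝ))) ^ (3 * n) = (n:ℝ) ^ n / (27 ^ n * (n:ℝ) ^ (3 * n)) := by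
    rw [div_pow, ht3, hd]
  rw [hexp, hfrac]
  have hfact : (n.factorial : ℝ) ≤ (n:ℝ) ^ n := by
    exact_mod_cast Nat.cast_le.mpr (n.factorial_le_pow)
  have hfactnn : (0:ℝ) ≤ (n.factorial : ℝ) := by positivity
  have hstep : (n.factorial : ℝ) * (n.factorial : ℝ) * (exp 3 ^ n * ((n:ℝ) ^ n / (27 ^ n * (n:ℝ) ^ (3 * n))))
      ≤ (n:ℝ) ^ n * (n:ℝ) ^ n * (exp 3 ^ n * ((n:ℝ) ^ n / (27 ^ n * (n:ℝ) ^ (3 * n)))) := by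
    have hpos : 0 ≤ exp 3 ^ n * ((n:ℝ) ^ n / (27 ^ n * (n:ℝ) ^ (3 * n))) := by positivity
    have := mul_le_mul (mul_le_mul hfact hfact hfactnn (by positivity)) (le_refl _) hpos
      (by positivity)
    exact this
  refine hstep.trans ?_
  have hsimp : (n:ℝ) ^ n * (n:ℝ) ^ n * (exp 3 ^ n * ((n:ℝ) ^ n / (27 ^ n * (n:ℝ) ^ (3 * n))))
      = (exp 3 / 27) ^ n := by
    have hne : (n:ℝ) ^ (3 * n) ≠ 0 := by positivity
    have h3 : (n:ℝ) ^ n * (n:ℝ) ^ n * (n:ℝ) ^ n = (n:ℝ) ^ (3 * n) := by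
      rw [← pow_add, ← pow_add]; congr 1; ring
    field_simp [div_pow]
    ring_nf
    rw [mul_assoc, ← mul_pow]; norm_num
  rw [hsimp]
  have hb1 : (exp 3 / 27 : ℝ) ≤ 3/4 := by
    have := aux_exp3
    nlinarith [exp_pos 3]
  have hb2 : ((exp 3 / 27 : ℝ)) ^ n ≤ (3/4 : ℝ) ^ n :=
    pow_le_pow_left₀ (by positivity) hb1 n
  have hb3 : ((3:ℝ)/4) ^ n ≤ (3/4 : ℝ) ^ 3 :=
    pow_le_pow_of_le_one (by norm_num) (by norm_num) hn3
  nlinarith [hb2, hb3]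

theorem stmt_17 :
    ∃ c₁ : ℝ, 0 < c₁ ∧ ∃ N : ℕ, ∀ n : ℕ, N ≤ n → 1 ≤ n →
      ∀ (Ω : Type) (_ : MeasureSpace Ω), IsProbabilityMeasure (ℙ : Measure Ω) →
      ∀ (X : (Fin 3 × Fin n × Fin n) → Ω → ℝ),
        (∀ i, Measurable (X i)) →
        iIndepFun X ℙ →
        (∀ i, Measure.map (X i) ℙ = volume.restrict (Set.Icc (0:ℝ) 1)) →
        c₁ * (n:ℝ) ^ ((1:ℝ)/3) ≤
          ∫ ω, (⨅ στ : Equiv.Perm (Fin n) × Equiv.Perm (Fin n),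
            ∑ i : Fin n,
              (X (0, i, στ.1 i) ω + X (1, i, στ.2 i) ω +
                X (2, στ.1 i, στ.2 i) ω)) ∂ℙ := by
  refine ⟨1/2, by norm_num, 3, ?_⟩
  intro n hN hn Ω _ hprob X hmeas hindep hmap
  haveI := hprob
  haveI : NeZero n := ⟨Nat.one_le_iff_ne_zero.mp hn⟩
  have hn0 : (0:ℝ) < n := by exact_mod_cast hn
  set t₀ : ℝ := (n:ℝ) ^ ((1:ℝ)/3) with ht₀def
  have ht₀ : 0 < t₀ := Real.rpow_pos_of_pos hn0 _
  set l : ℝ := 3 * n / t₀ with hldef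
  have hl : 0 < l := by positivity
  set S : Equiv.Perm (Fin n) × Equiv.Perm (Fin n) → Ω → ℝ :=
    fun στ ω => ∑ i : Fin n,
      (X (0, i, στ.1 i) ω + X (1, i, στ.2 i) ω + X (2, στ.1 i, στ.2 i) ω) with hSdef
  set Z : Ω → ℝ := fun ω => ⨅ στ : Equiv.Perm (Fin n) × Equiv.Perm (Fin n), S στ ω with hZdef
  have hgoal : (∫ ω, (⨅ στ : Equiv.Perm (Fin n) × Equiv.Perm (Fin n),
      ∑ i : Fin n, (X (0, i, στ.1 i) ω + X (1, i, στ.2 i) ω +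
        X (2, στ.1 i, στ.2 i) ω)) ∂ℙ) = ∫ ω, Z ω ∂ℙ := rfl
  rw [hgoal]
  -- inf' form
  have hZinf : ∀ ω, Z ω =
      Finset.univ.inf' Finset.univ_nonempty (fun στ => S στ ω) :=
    fun ω => (Finset.inf'_univ_eq_ciInf _).symm
  have hSmeas : ∀ στ, Measurable (S στ) := by
    intro στ
    exact Finset.measurable_sum _ (fun i _ => ((hmeas _).add (hmeas _)).add (hmeas _))
  have hZmeas : Measurable Z := by
    have : Z = fun ω => Finset.univ.inf' Finset.univ_nonempty (fun στ => S στ ω) :=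
      funext hZinf
    rw [this]
    exact aux_measurable_inf' _ _ _ hSmeas
  -- a.e. bounds
  have haeX : ∀ᵐ ω ∂(ℙ : Measure Ω), ∀ p, X p ω ∈ Set.Icc (0:ℝ) 1 :=
    ae_all_iff.mpr fun p => aux_ae_mem (hmeas p) (hmap p)
  have haeZ : ∀ᵐ ω ∂(ℙ : Measure Ω), 0 ≤ Z ω ∧ Z ω ≤ 3 * n := by
    filter_upwards [haeX] with ω hω
    have hSnn : ∀ στ, 0 ≤ S στ ω := by
      intro στ
      exact Finset.sum_nonneg fun i _ => by
        have h1 := (hω (0, i, στ.1 i)).1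
        have h2 := (hω (1, i, στ.2 i)).1
        have h3 := (hω (2, στ.1 i, στ.2 i)).1
        linarith
    constructor
    · rw [hZinf ω]
      exact Finset.le_inf' _ _ fun στ _ => hSnn στ
    · rw [hZinf ω]
      refine le_trans (Finset.inf'_le _ (Finset.mem_univ (1, 1))) ?_
      have : S (1, 1) ω ≤ ∑ _i : Fin n, (3:ℝ) := by
        refine Finset.sum_le_sum fun i _ => ?_
        have h1 := (hω (0, i, i)).2
        have h2 := (hω (1, i, i)).2
        have h3 := (hω (2, i, i)).2
        simpa using by linarith
      refine this.trans ?_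
      simp [mul_comm]
  have hZint : Integrable Z ℙ := by
    refine Integrable.mono' (integrable_const (3 * (n:ℝ)))
      hZmeas.aestronglyMeasurable ?_
    filter_upwards [haeZ] with ω hω
    rw [Real.norm_eq_abs, abs_le]
    exact ⟨by linarith [hω.1, hn0], hω.2⟩
  -- per-pair Chernoff
  have key : ∀ στ : Equiv.Perm (Fin n) × Equiv.Perm (Fin n),
      (ℙ {ω | S στ ω ≤ t₀}).toReal ≤ exp (l * t₀) * (1/l) ^ (3*n) := by
    rintro ⟨σ, τ⟩
    set g : Fin 3 × Fin n → Fin 3 × Fin n × Fin n :=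
      fun q => (q.1, if q.1 = 2 then σ q.2 else q.2,
        if q.1 = 0 then σ q.2 else τ q.2) with hg
    have hginj : Function.Injective g := by
      rintro ⟨m, i⟩ ⟨m', i'⟩ h
      simp only [hg, Prod.mk.injEq] at h
      obtain ⟨h1, h2, h3⟩ := h
      subst h1
      by_cases hm : m = 2
      · simp only [hm, if_pos] at h2
        exact Prod.ext rfl (σ.injective h2)
      · simp only [hm, if_neg, if_false] at h2
        exact Prod.ext rfl h2
    set sfin : Finset (Fin 3 × Fin n × Fin n) := Finset.image g Finset.univ with hsfin
    have hcard : sfin.card = 3 * n := by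
      rw [hsfin, Finset.card_image_of_injective _ hginj, Finset.card_univ]
      simp
    have hSeq : ∀ ω, S (σ, τ) ω = ∑ p ∈ sfin, X p ω := by
      intro ω
      rw [hsfin, Finset.sum_image (fun a _ b _ h => hginj h), Fintype.sum_prod_type,
        Fin.sum_univ_three, hSdef]
      simp only [hg]
      norm_num [Finset.sum_add_distrib]
      simp only [if_neg (by decide : ¬(0:Fin 3) = 2), if_neg (by decide : ¬(1:Fin 3) = 2),
        if_neg (by decide : ¬(2:Fin 3) = 0), if_pos rfl]
    have hset : {ω | S (σ, τ) ω ≤ t₀} = {ω | (∑ p ∈ sfin, X p ω) ≤ t₀} := by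
      ext ω; simp [hSeq ω]
    rw [hset, ← hcard]
    exact aux_chernoff hmeas hindep hmap sfin hl
  -- union bound
  set A : Set Ω := {ω | t₀ ≤ Z ω} with hA
  have hAmeas : MeasurableSet A := measurableSet_le measurable_const hZmeas
  have hcompl : Aᶜ ⊆ ⋃ στ : Equiv.Perm (Fin n) × Equiv.Perm (Fin n),
      {ω | S στ ω ≤ t₀} := by
    intro ω hω
    have hlt : Z ω < t₀ := lt_of_not_ge hω
    rw [hZinf ω] at hlt
    rw [Finset.inf'_lt_iff] at hlt
    obtain ⟨στ, _, hστ⟩ := hlt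
    exact Set.mem_iUnion.mpr ⟨στ, hστ.le⟩
  have hsum : (ℙ Aᶜ).toReal ≤
      ∑ στ : Equiv.Perm (Fin n) × Equiv.Perm (Fin n),
        (ℙ {ω | S στ ω ≤ t₀}).toReal := by
    rw [← ENNReal.toReal_sum (fun _ _ => measure_ne_top _ _)]
    refine ENNReal.toReal_mono ?_ ?_
    · exact (ENNReal.sum_lt_top.mpr fun _ _ => measure_lt_top _ _).ne
    · exact (measure_mono hcompl).trans (measure_iUnion_fintype_le _ _)
  have hcard2 : (Finset.univ : Finset (Equiv.Perm (Fin n) × Equiv.Perm (Fin n))).card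
      = n.factorial * n.factorial := by
    rw [Finset.card_univ, Fintype.card_prod, Fintype.card_perm, Fintype.card_fin]
  have hsum2 : (ℙ Aᶜ).toReal ≤ (n.factorial : ℝ) * (n.factorial : ℝ) *
      (exp (l * t₀) * (1/l) ^ (3*n)) := by
    refine hsum.trans ?_
    refine le_trans (Finset.sum_le_card_nsmul _ _ _ fun στ _ => key στ) ?_
    rw [hcard2]
    rw [nsmul_eq_mul]
    push_cast
    ring_nf
    exact le_refl _
  have hhalf : (ℙ Aᶜ).toReal ≤ 1/2 := hsum2.trans (aux_numeric n hN)
  have hAhalf : 1/2 ≤ (ℙ A).toReal := by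
    have hadd := measure_add_measure_compl (μ := (ℙ : Measure Ω)) hAmeas
    have : (ℙ A).toReal + (ℙ Aᶜ).toReal = 1 := by
      rw [← ENNReal.toReal_add (measure_ne_top _ _) (measure_ne_top _ _), hadd]
      simp
    linarith
  -- conclude
  have h1 : t₀ * (ℙ A).toReal ≤ ∫ ω in A, Z ω ∂ℙ :=
    setIntegral_ge_of_const_le_real hAmeas (measure_ne_top _ _) (fun x hx => hx)
      hZint.integrableOn
  have h2 : (∫ ω in A, Z ω ∂ℙ) ≤ ∫ ω, Z ω ∂ℙ :=
    setIntegral_le_integral hZint (haeZ.mono fun ω h => h.1)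
  have h3 : 1/2 * t₀ ≤ t₀ * (ℙ A).toReal := by
    calc 1/2 * t₀ = t₀ * (1/2) := by ring
    _ ≤ t₀ * (ℙ A).toReal := mul_le_mul_of_nonneg_left hAhalf ht₀.le
  linarith
end
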